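/- arXiv:1708.02466 — 7 statements merged into one kernel-verified Lean document; each statement's English description precedes it below -/
import Mathlib

section
/- For every real number a with a ≥ (3 + √13)/2, the (a,a)-Mahler measure of S(x,y) = y² + 2xy − x³ + x equals 3·log a; that is, (1/(2π)²)·∫₀^{2π}∫₀^{2π} log|S(a·e^{iθ}, a·e^{iφ})| dθ dφ = 3·log a. -/
open Complex Real intervalIntegral Metric

/-- The `(a,b)`-Mahler measure of a two-variable (Laurent) polynomial function `P`,
given by `(1/(2π)²)·∫₀^{2π}∫₀^{2π} log|P(a·e^{iθ}, b·e^{iφ})| dθ dφ`. -/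
noncomputable def mahlerMeasure (P : ℂ → ℂ → ℂ) (a b : ℝ) : ℝ :=
  (1 / (2 * Real.pi) ^ 2) *
    ∫ θ in (0:ℝ)..(2 * Real.pi), ∫ φ in (0:ℝ)..(2 * Real.pi),
      Real.log ‖P ((a : ℂ) * Complex.exp (θ * Complex.I))
        ((b : ℂ) * Complex.exp (φ * Complex.I))‖

/-- `S(x,y) = y² + 2xy − x³ + x`. -/
noncomputable def S : ℂ → ℂ → ℂ := fun x y => y ^ 2 + 2 * x * y - x ^ 3 + x

/-- Mean value property on the unit circle. -/
lemma meanValue {f : ℂ → ℂ} (hf : DiffContOnCl ℂ f (ball 0 1)) :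
    ∫ θ in (0:ℝ)..(2*π), f (Complex.exp (θ * I)) = 2*π * f 0 := by
  have h := hf.circleIntegral_sub_inv_smul (w := 0) (by simp)
  rw [circleIntegral] at h
  simp only [deriv_circleMap, circleMap_zero, sub_zero, smul_eq_mul, Complex.ofReal_one, one_mul] at h
  have : ∀ θ : ℝ, (Complex.exp (θ*I) * I) * ((Complex.exp (θ*I))⁻¹ * f (Complex.exp (θ*I)))
      = I * f (Complex.exp (θ*I)) := by
    intro θ
    field_simp [Complex.exp_ne_zero]
  rw [intervalIntegral.integral_congr (fun θ _ => this θ), intervalIntegral.integral_const_mul] at h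
  rw [show (2*(π:ℂ)*I*f 0) = I*(2*↑π*f 0) by ring] at h
  exact mul_left_cancel₀ I_ne_zero h

lemma slit_of_lt {u : ℂ} (hu : ‖u‖ < 1) : 1 - u ∈ Complex.slitPlane := by
  rw [Complex.mem_slitPlane_iff]
  left
  have : |u.re| < 1 := lt_of_le_of_lt (Complex.abs_re_le_norm u) hu
  simp only [Complex.sub_re, Complex.one_re]
  cases abs_lt.mp this with
  | intro h1 h2 => linarith

lemma int_log_one_sub {w : ℂ} (hw : ‖w‖ < 1) :
    ∫ θ in (0:ℝ)..(2*π), Real.log (‖1 - w * Complex.exp (θ * I)‖) = 0 := by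
  set f : ℂ → ℂ := fun z => Complex.log (1 - w * z) with hf
  have hslit : ∀ z : ℂ, ‖z‖ ≤ 1 → 1 - w * z ∈ Complex.slitPlane := by
    intro z hz
    apply slit_of_lt
    rw [norm_mul]
    calc ‖w‖ * ‖z‖ ≤ ‖w‖ * 1 :=
          mul_le_mul_of_nonneg_left hz (norm_nonneg w)
      _ < 1 := by rwa [mul_one]
  have hd : DifferentiableOn ℂ f (closedBall 0 1) := by
    intro z hz
    have : DifferentiableAt ℂ f z := by
      apply DifferentiableAt.clog
      · fun_prop
      · exact hslit z (by simpa using mem_closedBall_zero_iff.mp hz)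
    exact this.differentiableWithinAt
  have hdc : DiffContOnCl ℂ f (ball 0 1) :=
    ⟨hd.mono ball_subset_closedBall, hd.continuousOn.mono (by rw [closure_ball (0:ℂ) one_ne_zero])⟩
  have hmv := meanValue hdc
  have hf0 : f 0 = 0 := by simp [hf]
  rw [hf0, mul_zero] at hmv
  have hcont : Continuous fun θ : ℝ => f (Complex.exp (θ * I)) := by
    apply Continuous.clog
    · fun_prop
    · intro θ
      exact hslit _ (by simp [Complex.norm_exp])
  have hint : IntervalIntegrable (fun θ : ℝ => f (Complex.exp (θ * I))) MeasureTheory.volume 0 (2*π) :=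
    hcont.intervalIntegrable 0 (2*π)
  have := Complex.reCLM.intervalIntegral_comp_comm hint
  rw [hmv] at this
  simp only [Complex.reCLM_apply, map_zero] at this
  calc ∫ θ in (0:ℝ)..(2*π), Real.log (‖1 - w * Complex.exp (θ * I)‖)
      = ∫ θ in (0:ℝ)..(2*π), (f (Complex.exp (θ*I))).re := by
        apply intervalIntegral.integral_congr
        intro θ _
        simp [f, Complex.log_re]
    _ = 0 := this

lemma one_sub_ne {w : ℂ} (hw : ‖w‖ < 1) {E : ℂ} (hE : ‖E‖ = 1) :
    1 - w * E ≠ 0 := by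
  intro h
  rw [sub_eq_zero] at h
  have : ‖w * E‖ = 1 := by rw [← h]; simp
  rw [norm_mul, hE, mul_one] at this
  exact absurd this hw.ne

lemma int_log_decomp {w : ℂ} (hw : ‖w‖ < 1) {K : ℝ} (hK : 0 < K) {F : ℝ → ℂ}
    (hpt : ∀ θ : ℝ, ‖F θ‖ = K * ‖1 - w * Complex.exp (θ * I)‖) :
    ∫ θ in (0:ℝ)..(2*π), Real.log (‖F θ‖) = 2*π * Real.log K := by
  have habs : ∀ θ : ℝ, ‖Complex.exp ((θ:ℂ) * I)‖ = 1 := by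
    intro θ; simp [Complex.norm_exp]
  have hne : ∀ θ : ℝ, ‖1 - w * Complex.exp ((θ:ℂ) * I)‖ ≠ 0 := by
    intro θ
    simpa [sub_eq_zero] using one_sub_ne hw (habs θ)
  have hcont : Continuous fun θ : ℝ => Real.log (‖1 - w * Complex.exp ((θ:ℂ) * I)‖) :=
    Continuous.log (continuous_norm.comp (by fun_prop)) hne
  have heq : ∀ θ ∈ Set.uIcc (0:ℝ) (2*π), Real.log (‖F θ‖)
      = Real.log K + Real.log (‖1 - w * Complex.exp ((θ:ℂ) * I)‖) := by
    intro θ _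
    rw [hpt θ, Real.log_mul hK.ne' (hne θ)]
  rw [intervalIntegral.integral_congr heq, intervalIntegral.integral_add
    (intervalIntegrable_const) (hcont.intervalIntegrable 0 (2*π)), int_log_one_sub hw]
  simp [mul_comm]

/-- `∫ log|c e^{iθ} − r| = 2π log|r|` when `|c| < |r|`. -/
lemma int_log_root {c r : ℂ} (h : ‖c‖ < ‖r‖) :
    ∫ θ in (0:ℝ)..(2*π), Real.log (‖c * Complex.exp (θ * I) - r‖)
      = 2*π * Real.log (‖r‖) := by
  have hr0 : ‖r‖ ≠ 0 := (lt_of_le_of_lt (norm_nonneg c) h).ne'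
  have hr : r ≠ 0 := fun h0 => hr0 (by simp [h0])
  have hw : ‖c / r‖ < 1 := by
    rw [norm_div, div_lt_one (lt_of_le_of_lt (norm_nonneg c) h)]
    exact h
  apply int_log_decomp hw (lt_of_le_of_lt (norm_nonneg c) h)
  intro θ
  have h1 : c * Complex.exp (θ * I) - r = -r * (1 - (c/r) * Complex.exp (θ * I)) := by
    field_simp
    ring
  rw [h1, norm_mul]
  simp

/-- `∫ log|c e^{iθ} − r| = 2π log|c|` when `|r| < |c|`. -/
lemma int_log_lead {c r : ℂ} (h : ‖r‖ < ‖c‖) :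
    ∫ θ in (0:ℝ)..(2*π), Real.log (‖c * Complex.exp (θ * I) - r‖)
      = 2*π * Real.log (‖c‖) := by
  have hc0 : ‖c‖ ≠ 0 := (lt_of_le_of_lt (norm_nonneg r) h).ne'
  have hc : c ≠ 0 := fun h0 => hc0 (by simp [h0])
  set w : ℂ := (starRingEnd ℂ) (r / c) with hwdef
  have hw : ‖w‖ < 1 := by
    rw [hwdef, Complex.norm_conj, norm_div, div_lt_one (lt_of_le_of_lt (norm_nonneg r) h)]
    exact h
  apply int_log_decomp hw (lt_of_le_of_lt (norm_nonneg r) h)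
  intro θ
  set E : ℂ := Complex.exp ((θ:ℂ) * I) with hEdef
  have hconjE : (starRingEnd ℂ) E = Complex.exp (-((θ:ℂ) * I)) := by
    rw [hEdef, ← Complex.exp_conj]
    congr 1
    simp [Complex.conj_I]
  have hEmul : E * (starRingEnd ℂ) E = 1 := by
    rw [hconjE, hEdef, ← Complex.exp_add]
    simp
  have key : c * E - r = (c * E) * (1 - (r/c) * (starRingEnd ℂ) E) := by
    field_simp
    linear_combination r * hEmul
  have h2 : (starRingEnd ℂ) (1 - w * E) = 1 - (r/c) * (starRingEnd ℂ) E := by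
    rw [map_sub, map_one, map_mul, hwdef, Complex.conj_conj]
  have habsE : ‖E‖ = 1 := by rw [hEdef]; simp [Complex.norm_exp]
  rw [key, norm_mul, ← h2, Complex.norm_conj, norm_mul, habsE, mul_one]

lemma root_big {a : ℝ} (ha3 : 3 ≤ a) (hcube : 3*a^2 + a ≤ a^3) {x r : ℂ}
    (hx : ‖x‖ = a) (hx2 : x^2 ≠ (a:ℂ)^2)
    (hroot : r^2 + 2*x*r + x - x^3 = 0) : a < ‖r‖ := by
  by_contra hle
  push_neg at hle
  have ha0 : (0:ℝ) < a := by linarith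
  have h1 : x^3 - x = r^2 + 2*x*r := by linear_combination -hroot
  have hrn : (0:ℝ) ≤ ‖r‖ := norm_nonneg r
  have h2 : ‖x^3 - x‖ ≤ 3*a^2 := by
    rw [h1]
    calc ‖r^2 + 2*x*r‖ ≤ ‖r^2‖ + ‖2*x*r‖ :=
          norm_add_le _ _
      _ = (‖r‖)^2 + 2 * a * ‖r‖ := by
          rw [norm_pow, norm_mul, norm_mul, hx]
          simp
      _ ≤ a^2 + 2*a*a := by nlinarith
      _ = 3*a^2 := by ring
  -- Re (x²) < a²
  have habs2 : ‖x^2‖ = a^2 := by rw [norm_pow, hx]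
  have hre : (x^2).re < a^2 := by
    rcases lt_or_eq_of_le (Complex.re_le_norm (x^2)) with h | h
    · rwa [habs2] at h
    · exfalso
      apply hx2
      have him : (x^2).im = 0 := by
        have h8 := Complex.sq_norm (x^2)
        rw [habs2, Complex.normSq_apply] at h8
        have hre2 : (x^2).re = a^2 := by rw [h, habs2]
        have h9 : ((x^2).im)^2 = 0 := by nlinarith [h8, hre2]
        exact pow_eq_zero_iff two_ne_zero |>.mp h9
      have : x^2 = ((x^2).re : ℂ) := by
        exact Complex.ext rfl (by simp [him])
      rw [this, h, habs2]
      norm_num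
  -- |x² − 1| > a² − 1
  have h3 : (a^2 - 1) < ‖x^2 - 1‖ := by
    have hsq : (‖x^2 - 1‖)^2 = ((x^2).re - 1)^2 + ((x^2).im)^2 := by
      rw [Complex.sq_norm, Complex.normSq_apply]
      simp
      ring
    have hsum : ((x^2).re)^2 + ((x^2).im)^2 = a^4 := by
      have := Complex.sq_norm (x^2)
      rw [habs2, Complex.normSq_apply] at this
      nlinarith [this]
    have h4 : (a^2-1)^2 < (‖x^2 - 1‖)^2 := by
      rw [hsq]
      nlinarith
    have := norm_nonneg (x^2 - 1)
    nlinarith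
  have h5 : ‖x^3 - x‖ = a * ‖x^2 - 1‖ := by
    rw [show x^3 - x = x * (x^2 - 1) by ring, norm_mul, hx]
  nlinarith [h2, h3, h5, hcube]

lemma abs_ofReal_pos {a : ℝ} (ha : 0 < a) : ‖(a : ℂ)‖ = a := by
  rw [Complex.norm_real, Real.norm_eq_abs, abs_of_pos ha]

lemma inner_int {a : ℝ} (ha3 : 3 ≤ a) (hcube : 3*a^2 + a ≤ a^3) {x : ℂ}
    (hx : ‖x‖ = a) (hx2 : x^2 ≠ (a:ℂ)^2) :
    (∫ φ in (0:ℝ)..(2*π), Real.log (‖((a:ℂ) * Complex.exp (φ*I))^2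
       + 2*x*((a:ℂ)*Complex.exp (φ*I)) - x^3 + x‖))
    = 2*π*(Real.log a + Real.log (‖x - 1‖) + Real.log (‖x + 1‖)) := by
  have ha0 : (0:ℝ) < a := by linarith
  have haa : ‖(a:ℂ)‖ = a := abs_ofReal_pos ha0
  obtain ⟨s, hs⟩ : ∃ s : ℂ, s^2 = x^3 + x^2 - x :=
    IsAlgClosed.exists_pow_nat_eq (x^3 + x^2 - x) zero_lt_two
  set r₁ : ℂ := -x + s with hr1def
  set r₂ : ℂ := -x - s with hr2def
  have hfact : ∀ y : ℂ, y^2 + 2*x*y - x^3 + x = (y - r₁) * (y - r₂) := by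
    intro y
    rw [hr1def, hr2def]
    linear_combination hs
  have hb1 : a < ‖r₁‖ := root_big ha3 hcube hx hx2 (by rw [hr1def]; linear_combination hs)
  have hb2 : a < ‖r₂‖ := root_big ha3 hcube hx hx2 (by rw [hr2def]; linear_combination hs)
  have habsE : ∀ φ : ℝ, ‖(a:ℂ) * Complex.exp ((φ:ℂ)*I)‖ = a := by
    intro φ
    rw [norm_mul, haa, Complex.norm_exp]
    simp
  have hne : ∀ (r : ℂ), a < ‖r‖ →
      ∀ φ : ℝ, ‖(a:ℂ) * Complex.exp ((φ:ℂ)*I) - r‖ ≠ 0 := by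
    intro r hr φ h0
    rw [norm_eq_zero, sub_eq_zero] at h0
    rw [← h0, habsE φ] at hr
    exact lt_irrefl a hr
  have hptwise : ∀ φ ∈ Set.uIcc (0:ℝ) (2*π),
      Real.log (‖((a:ℂ) * Complex.exp (φ*I))^2
        + 2*x*((a:ℂ)*Complex.exp (φ*I)) - x^3 + x‖)
      = Real.log (‖(a:ℂ) * Complex.exp (φ*I) - r₁‖)
        + Real.log (‖(a:ℂ) * Complex.exp (φ*I) - r₂‖) := by
    intro φ _
    rw [hfact, norm_mul, Real.log_mul (hne r₁ hb1 φ) (hne r₂ hb2 φ)]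
  have hcont : ∀ r : ℂ, a < ‖r‖ → Continuous
      (fun φ : ℝ => Real.log (‖(a:ℂ) * Complex.exp ((φ:ℂ)*I) - r‖)) := by
    intro r hr
    exact Continuous.log (continuous_norm.comp (by fun_prop)) (hne r hr)
  rw [intervalIntegral.integral_congr hptwise, intervalIntegral.integral_add
    ((hcont r₁ hb1).intervalIntegrable 0 (2*π)) ((hcont r₂ hb2).intervalIntegrable 0 (2*π))]
  have hi1 := int_log_root (c := (a:ℂ)) (r := r₁) (by rw [haa]; exact hb1)
  have hi2 := int_log_root (c := (a:ℂ)) (r := r₂) (by rw [haa]; exact hb2)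
  rw [hi1, hi2, ← mul_add]
  congr 1
  have ha0' : (0:ℝ) < a := ha0
  have hne1 : ‖r₁‖ ≠ 0 := (lt_trans ha0 hb1).ne'
  have hne2 : ‖r₂‖ ≠ 0 := (lt_trans ha0 hb2).ne'
  rw [← Real.log_mul hne1 hne2, ← norm_mul]
  have hprod : r₁ * r₂ = -(x*(x-1)*(x+1)) := by
    rw [hr1def, hr2def]
    linear_combination -hs
  have hxm1 : ‖x - 1‖ ≠ 0 := by
    intro h
    rw [norm_eq_zero, sub_eq_zero] at h
    rw [h] at hx
    simp at hx
    linarith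
  have hxp1 : ‖x + 1‖ ≠ 0 := by
    intro h
    rw [norm_eq_zero, ← sub_neg_eq_add, sub_eq_zero] at h
    rw [h] at hx
    simp at hx
    linarith
  rw [hprod, show ‖-(x*(x-1)*(x+1))‖ = ‖x*(x-1)*(x+1)‖ by simp,
    norm_mul, norm_mul, hx,
    Real.log_mul (mul_ne_zero ha0.ne' hxm1) hxp1, Real.log_mul ha0.ne' hxm1]


theorem stmt_0 (a : ℝ) (ha : (3 + Real.sqrt 13) / 2 ≤ a) :
    mahlerMeasure S a a = 3 * Real.log a := by
  have hs13 : (Real.sqrt 13)^2 = 13 := Real.sq_sqrt (by norm_num)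
  have hs13' : (3:ℝ) ≤ Real.sqrt 13 := by nlinarith [Real.sqrt_nonneg 13]
  have ha3 : (3:ℝ) ≤ a := by linarith
  have ha0 : (0:ℝ) < a := by linarith
  have hq : 3*a + 1 ≤ a^2 := by nlinarith [hs13, hs13', sq_nonneg (2*a - 3 - Real.sqrt 13)]
  have hcube : 3*a^2 + a ≤ a^3 := by nlinarith [hq, mul_nonneg ha0.le (by linarith : (0:ℝ) ≤ a^2 - 3*a - 1)]
  have hπ := Real.pi_pos
  have haa : ‖(a:ℂ)‖ = a := abs_ofReal_pos ha0
  -- the bad set has measure zero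
  have hsub : {θ : ℝ | ((a:ℂ) * Complex.exp (θ*I))^2 = (a:ℂ)^2}
      ⊆ Set.range (fun n : ℤ => (n:ℝ) * π) := by
    intro θ hθ
    simp only [Set.mem_setOf_eq] at hθ
    have ha0' : (a:ℂ) ≠ 0 := by
      simpa using ha0.ne'
    have hE : Complex.exp ((θ:ℂ)*I) ^ 2 = 1 := by
      apply mul_left_cancel₀ (pow_ne_zero 2 ha0')
      rw [mul_one]
      linear_combination hθ
    rw [← Complex.exp_nat_mul] at hE
    rw [Complex.exp_eq_one_iff] at hE
    obtain ⟨n, hn⟩ := hE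
    refine ⟨n, ?_⟩
    show (n:ℝ) * π = θ
    have hI : ((2:ℕ):ℂ) * ((θ:ℂ) * I) = ((2*θ:ℝ):ℂ) * I := by push_cast; ring
    rw [hI] at hn
    have hn2 : ((2*θ:ℝ):ℂ) * I = ((n:ℂ) * (2*(π:ℝ))) * I := by
      rw [hn]; ring
    have hn' : ((2*θ:ℝ):ℂ) = (n:ℂ) * (2*(π:ℝ)) := mul_right_cancel₀ I_ne_zero hn2
    have : (2*θ : ℝ) = (n:ℝ) * (2*π) := by
      exact_mod_cast hn'
    linarith [this]
  have hmeas : MeasureTheory.volume {θ : ℝ | ((a:ℂ) * Complex.exp (θ*I))^2 = (a:ℂ)^2} = 0 :=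
    MeasureTheory.measure_mono_null hsub (Set.Countable.measure_zero (Set.countable_range _) _)
  have hbad : ∀ᵐ θ : ℝ, ((a:ℂ) * Complex.exp (θ*I))^2 ≠ (a:ℂ)^2 := by
    rw [MeasureTheory.ae_iff]
    simpa using hmeas
  rw [mahlerMeasure]
  have houter : (∫ θ in (0:ℝ)..(2*π), ∫ φ in (0:ℝ)..(2*π),
      Real.log (‖S ((a:ℂ)*Complex.exp (θ*I)) ((a:ℂ)*Complex.exp (φ*I))‖))
      = ∫ θ in (0:ℝ)..(2*π), (2*π*(Real.log a
          + Real.log (‖(a:ℂ)*Complex.exp (θ*I) - 1‖)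
          + Real.log (‖(a:ℂ)*Complex.exp (θ*I) + 1‖))) := by
    apply intervalIntegral.integral_congr_ae
    filter_upwards [hbad] with θ hθ _
    have hx : ‖(a:ℂ)*Complex.exp ((θ:ℂ)*I)‖ = a := by
      rw [norm_mul, haa, Complex.norm_exp]
      simp
    have := inner_int ha3 hcube hx hθ
    simpa [S] using this
  rw [houter]
  -- compute the outer integral
  have hne1 : ∀ θ : ℝ, ‖(a:ℂ) * Complex.exp ((θ:ℂ)*I) - 1‖ ≠ 0 := by
    intro θ h0
    rw [norm_eq_zero, sub_eq_zero] at h0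
    have : ‖(a:ℂ) * Complex.exp ((θ:ℂ)*I)‖ = 1 := by rw [h0]; simp
    rw [norm_mul, haa, Complex.norm_exp] at this
    simp at this
    linarith
  have hne2 : ∀ θ : ℝ, ‖(a:ℂ) * Complex.exp ((θ:ℂ)*I) + 1‖ ≠ 0 := by
    intro θ h0
    rw [norm_eq_zero, ← sub_neg_eq_add, sub_eq_zero] at h0
    have : ‖(a:ℂ) * Complex.exp ((θ:ℂ)*I)‖ = 1 := by rw [h0]; simp
    rw [norm_mul, haa, Complex.norm_exp] at this
    simp at this
    linarith
  have hc1 : Continuous (fun θ : ℝ => Real.log (‖(a:ℂ) * Complex.exp ((θ:ℂ)*I) - 1‖)) :=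
    Continuous.log (continuous_norm.comp (by fun_prop)) (hne1)
  have hc2 : Continuous (fun θ : ℝ => Real.log (‖(a:ℂ) * Complex.exp ((θ:ℂ)*I) + 1‖)) :=
    Continuous.log (continuous_norm.comp (by fun_prop)) (hne2)
  have hia : (1:ℝ) < ‖(a:ℂ)‖ := by rw [haa]; linarith
  have hint1 : (∫ θ in (0:ℝ)..(2*π), Real.log (‖(a:ℂ) * Complex.exp ((θ:ℂ)*I) - 1‖))
      = 2*π*Real.log a := by
    have := int_log_lead (c := (a:ℂ)) (r := 1) (by simpa using hia)
    rw [haa] at this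
    exact this
  have hint2 : (∫ θ in (0:ℝ)..(2*π), Real.log (‖(a:ℂ) * Complex.exp ((θ:ℂ)*I) + 1‖))
      = 2*π*Real.log a := by
    have := int_log_lead (c := (a:ℂ)) (r := -1) (by simpa using hia)
    rw [haa] at this
    rw [← this]
    apply intervalIntegral.integral_congr
    intro θ _
    simp only [sub_neg_eq_add]
  rw [intervalIntegral.integral_const_mul, intervalIntegral.integral_add
    (intervalIntegrable_const.add (hc1.intervalIntegrable 0 (2*π)))
    (hc2.intervalIntegrable 0 (2*π)), intervalIntegral.integral_add
    intervalIntegrable_const (hc1.intervalIntegrable 0 (2*π)),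
    hint1, hint2, intervalIntegral.integral_const]
  simp only [sub_zero, smul_eq_mul]
  have hπ0 : (π:ℝ) ≠ 0 := hπ.ne'
  field_simp
  ring
end

section
/- Let a > 0 be real and let X be a complex number with |X| = a. Define Y₋ = X·(−1 − (X + 1 − X⁻¹)^{1/2}), where z^{1/2} denotes the principal square root (the principal branch of z ↦ z^{1/2}, sending a number of argument φ ∈ (−π, π] to one of argument φ/2). Then |Y₋| ≥ a. (In particular Y₋ is a root in Y of Y² + 2XY − X³ + X = 0 when X + 1 − X⁻¹ avoids the branch cut.) -/
/-- For `a > 0` and `|X| = a`, the root `Y₋ = X·(−1 − (X + 1 − X⁻¹)^{1/2})` of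
`Y² + 2XY − X³ + X = 0` (principal branch of the square root) satisfies `|Y₋| ≥ a`. -/
theorem stmt_9 (a : ℝ) (ha : 0 < a) (X : ℂ) (hX : ‖X‖ = a) :
    a ≤ ‖X * (-1 - (X + 1 - X⁻¹) ^ ((1 : ℂ) / 2))‖ := by
  set w : ℂ := (X + 1 - X⁻¹) ^ ((1 : ℂ) / 2) with hw
  have hre : 0 ≤ w.re := by
    rw [hw, show (1 : ℂ) / 2 = (2⁻¹ : ℂ) by norm_num, Complex.cpow_inv_two_re]
    exact Real.sqrt_nonneg _
  have h1 : 1 ≤ ‖-1 - w‖ := by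
    have : ‖-1 - w‖ = ‖1 + w‖ := by
      rw [show (-1 - w : ℂ) = -(1 + w) by ring, norm_neg]
    rw [this]
    have hsq : 1 ≤ ‖1 + w‖ ^ 2 := by
      rw [Complex.sq_norm, Complex.normSq_apply]
      simp only [Complex.add_re, Complex.add_im, Complex.one_re, Complex.one_im]
      nlinarith [sq_nonneg w.im, sq_nonneg w.re]
    nlinarith [norm_nonneg (1 + w)]
  calc a = a * 1 := (mul_one a).symm
    _ ≤ ‖X‖ * ‖-1 - w‖ := by
        rw [hX]; exact mul_le_mul_of_nonneg_left h1 ha.le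
    _ = ‖X * (-1 - w)‖ := (norm_mul _ _).symm
end

section
/- Let a > 0 be real with |a − a⁻¹| ≥ 3, and let X be a complex number with |X| = a. Define Y₊ = X·(−1 + (X + 1 − X⁻¹)^{1/2}), where z^{1/2} denotes the principal square root. Then |Y₊| ≥ a. -/
set_option maxHeartbeats 1000000 in
/-- For `a > 0` with `|a − a⁻¹| ≥ 3` and `|X| = a`, the root
`Y₊ = X·(−1 + (X + 1 − X⁻¹)^{1/2})` of `Y² + 2XY − X³ + X = 0`
(principal branch of the square root) satisfies `|Y₊| ≥ a`. -/
theorem stmt_10 (a : ℝ) (ha : 0 < a) (hta : 3 ≤ |a - a⁻¹|) (X : ℂ)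
    (hX : ‖X‖ = a) :
    a ≤ ‖X * (-1 + (X + 1 - X⁻¹) ^ ((1 : ℂ) / 2))‖ := by
  have hX0 : X ≠ 0 := by
    intro h; rw [h] at hX; simp at hX; linarith
  set w : ℂ := X + 1 - X⁻¹ with hw
  set s : ℂ := w ^ ((1 : ℂ) / 2) with hs
  -- M = |w - 1| = |X - X⁻¹| ≥ |a - a⁻¹| ≥ 3
  set M : ℝ := ‖w - 1‖ with hM
  have hw1 : w - 1 = X - X⁻¹ := by ring
  have hM3 : 3 ≤ M := by
    have h1 : |‖X‖ - ‖X⁻¹‖| ≤ ‖X - X⁻¹‖ := by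
      exact abs_norm_sub_norm_le X X⁻¹
    rw [norm_inv, hX] at h1
    rw [hM, hw1]
    linarith
  have hw0 : w ≠ 0 := by
    intro h
    rw [hM, h] at hM3
    norm_num at hM3
  have hs2 : s * s = w := by
    rw [hs, ← Complex.cpow_add _ _ hw0]
    norm_num
  -- real quantities
  have hr0 : 0 ≤ s.re := by
    have : ((1 : ℂ) / 2) = (((1 : ℝ) / 2 : ℝ) : ℂ) := by norm_num
    rw [hs, this, Complex.cpow_ofReal_re]
    apply mul_nonneg (Real.rpow_nonneg (norm_nonneg _) _)
    apply Real.cos_nonneg_of_mem_Icc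
    constructor
    · have := Complex.neg_pi_lt_arg w; linarith
    · have := Complex.arg_le_pi w; linarith
  have hb2 : ‖s‖ ^ 2 = ‖w‖ := by
    rw [sq, ← norm_mul, hs2]
  have hrb : s.re ≤ ‖s‖ := Complex.re_le_norm s
  have hbM : ‖w‖ ≤ M + 1 := by
    calc ‖w‖ = ‖(w - 1) + 1‖ := by ring_nf
    _ ≤ ‖w - 1‖ + ‖(1:ℂ)‖ := norm_add_le _ _
    _ = M + 1 := by simp [hM]
  set u : ℝ := ‖s - 1‖ with hu
  set v : ℝ := ‖s + 1‖ with hv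
  have huv : u * v = M := by
    rw [hu, hv, ← norm_mul, hM]
    congr 1
    rw [← hs2]; ring
  have hu2 : u ^ 2 = ‖s‖ ^ 2 - 2 * s.re + 1 := by
    rw [hu, Complex.sq_norm, Complex.sq_norm, Complex.normSq_apply, Complex.normSq_apply,
      Complex.sub_re, Complex.sub_im, Complex.one_re, Complex.one_im]
    ring
  have hv2 : v ^ 2 = ‖s‖ ^ 2 + 2 * s.re + 1 := by
    rw [hv, Complex.sq_norm, Complex.sq_norm, Complex.normSq_apply, Complex.normSq_apply,
      Complex.add_re, Complex.add_im, Complex.one_re, Complex.one_im]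
    ring
  have hu0 : 0 ≤ u := norm_nonneg _
  have hv0 : 0 ≤ v := norm_nonneg _
  have hb0 : 0 ≤ ‖s‖ := norm_nonneg _
  -- key inequality : 1 ≤ u
  have hkey : 1 ≤ u := by
    by_contra h
    push_neg at h
    set b := ‖s‖
    have hr2 : s.re ^ 2 ≤ b ^ 2 := by nlinarith
    -- M² = u²(u² + 4 r) < 1 + 4 r ; r² ≤ b² ≤ M + 1
    have hM2 : M ^ 2 = u ^ 2 * (u ^ 2 + 4 * s.re) := by
      rw [← huv]; nlinarith [hu2, hv2]
    have h1 : u ^ 2 < 1 := by nlinarith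
    have h2 : M ^ 2 - 1 < 4 * s.re := by nlinarith
    have hM21 : (0:ℝ) ≤ M ^ 2 - 1 := by nlinarith
    have h3a : (M ^ 2 - 1) ^ 2 < (4 * s.re) ^ 2 := by
      apply pow_lt_pow_left₀ h2 hM21
      norm_num
    have h3b : (4 * s.re) ^ 2 = 16 * s.re ^ 2 := by ring
    have h3c : b ^ 2 ≤ M + 1 := hb2 ▸ hbM
    have h3 : (M ^ 2 - 1) ^ 2 < 16 * (M + 1) := by linarith
    have h4 : 16 ≤ (M - 1) ^ 2 * (M + 1) := by nlinarith
    have hM1 : (0:ℝ) ≤ M + 1 := by linarith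
    have h5 : 16 * (M + 1) ≤ ((M - 1) ^ 2 * (M + 1)) * (M + 1) :=
      mul_le_mul_of_nonneg_right h4 hM1
    have h6 : ((M - 1) ^ 2 * (M + 1)) * (M + 1) = (M ^ 2 - 1) ^ 2 := by ring
    linarith
  -- conclude
  have habs : ‖X * (-1 + s)‖ = a * u := by
    rw [norm_mul, hX, hu]
    congr 2
    ring
  rw [habs]
  calc a = a * 1 := (mul_one a).symm
  _ ≤ a * u := by nlinarith
end

section
/- Let a > 0 be real with |a − a⁻¹| ≤ 1, and let X be a complex number with |X| = a. Define Y₊ = X·(−1 + (X + 1 − X⁻¹)^{1/2}), where z^{1/2} denotes the principal square root. Then |Y₊| ≤ a. -/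
open Complex Real

lemma poly_key (a x y r i : ℝ) (ha : 0 < a) (h1 : x^2 + y^2 = a^2)
    (h2 : (a^2 - 1)^2 ≤ a^2)
    (hr : r * a^2 = a^2 + x*(a^2-1)) (hi : i * a^2 = y*(a^2+1))
    (hb : 0 < r^2 + i^2 - 2*r) :
    (r^2 + i^2 - 2*r)^2 ≤ 4*(r^2+i^2) := by
  set A : ℝ := x^2*(a^2-1)^2 + y^2*(a^2+1)^2 - a^4 with hA
  have ha4 : (0:ℝ) < a^4 := by positivity
  have ha8 : (0:ℝ) < a^8 := by positivity
  have hAeq : (r^2+i^2-2*r) * a^4 = A := by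
    rw [hA]
    linear_combination (r*a^2 + a^2 + x*(a^2-1) - 2*a^2)*hr + (i*a^2 + y*(a^2+1))*hi
  have hpA : (r^2+i^2) * a^4 = A + 2*a^4 + 2*a^2*(x*(a^2-1)) := by
    rw [hA]
    linear_combination (r*a^2 + a^2 + x*(a^2-1))*hr + (i*a^2 + y*(a^2+1))*hi
  have hApos : 0 < A := by nlinarith [hb, ha4, hAeq]
  have hB : A ≤ 4*a^4 := by
    rw [hA]
    nlinarith [mul_le_mul_of_nonneg_left h2 (sq_nonneg x),
      mul_le_mul_of_nonneg_left h2 (sq_nonneg y), sq_nonneg y, sq_nonneg x,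
      sq_nonneg a, h1, mul_le_mul_of_nonneg_left (show y^2 ≤ a^2 by nlinarith [sq_nonneg x]) (show (0:ℝ) ≤ 4*a^2 by positivity)]
  have hx2 : x^2*(a^2-1)^2 ≤ a^2*a^2 := by
    nlinarith [mul_le_mul_of_nonneg_left h2 (sq_nonneg x), sq_nonneg x, sq_nonneg y, sq_nonneg (a^2-1)]
  have hC : 0 ≤ a^2 + x*(a^2-1) := by
    nlinarith [hx2, sq_nonneg (a^2 + x*(a^2-1))]
  have final : (r^2+i^2-2*r)^2 * a^8 ≤ 4*(r^2+i^2) * a^8 := by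
    have e1 : (r^2+i^2-2*r)^2 * a^8 = A^2 := by linear_combination ((r^2+i^2-2*r)*a^4 + A)*hAeq
    have e2 : 4*(r^2+i^2)*a^8 = (A + 2*a^4 + 2*a^2*(x*(a^2-1)))*(4*a^4) := by
      linear_combination (4*a^4)*hpA
    rw [e1, e2]
    nlinarith [mul_nonneg hApos.le (sub_nonneg.2 hB),
      mul_nonneg (le_of_lt (by positivity : (0:ℝ) < a^6)) hC]
  exact le_of_mul_le_mul_right final ha8

/-- For `a > 0` with `|a − a⁻¹| ≤ 1` and `|X| = a`, the root
`Y₊ = X·(−1 + (X + 1 − X⁻¹)^{1/2})` of `Y² + 2XY − X³ + X = 0`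
(principal branch of the square root) satisfies `|Y₊| ≤ a`. -/
theorem stmt_11 (a : ℝ) (ha : 0 < a) (hta : |a - a⁻¹| ≤ 1) (X : ℂ)
    (hX : ‖X‖ = a) :
    ‖X * (-1 + (X + 1 - X⁻¹) ^ ((1 : ℂ) / 2))‖ ≤ a := by
  have hX0 : X ≠ 0 := by
    intro h; rw [h, norm_zero] at hX; exact absurd hX.symm (ne_of_gt ha)
  have ha' : a ≠ 0 := ne_of_gt ha
  have hIa : a * a⁻¹ = 1 := mul_inv_cancel₀ ha'
  have h2' : (a^2-1)^2 ≤ a^2 := by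
    have h := abs_le.mp hta
    have hu1 : a^2 - 1 ≤ a := by nlinarith [mul_le_mul_of_nonneg_left h.2 ha.le, hIa]
    have hu2 : -a ≤ a^2 - 1 := by nlinarith [mul_le_mul_of_nonneg_left h.1 ha.le, hIa]
    nlinarith [mul_nonneg (by linarith : (0:ℝ) ≤ a - (a^2-1)) (by linarith : (0:ℝ) ≤ a + (a^2-1))]
  set w : ℂ := X + 1 - X⁻¹ with hw
  set z : ℂ := w ^ ((1:ℂ)/2) with hz
  rw [norm_mul, hX]
  have h12 : ((1:ℂ)/2) = (2⁻¹ : ℂ) := by norm_num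
  have hzre : z.re = Real.sqrt ((‖w‖ + w.re)/2) := by
    rw [hz, h12]; exact Complex.cpow_inv_two_re w
  have hzim : |z.im| = Real.sqrt ((‖w‖ - w.re)/2) := by
    rw [hz, h12]; exact Complex.abs_cpow_inv_two_im w
  have hns : Complex.normSq X = a^2 := by rw [← Complex.sq_norm, hX]
  have hxy : X.re^2 + X.im^2 = a^2 := by
    rw [Complex.normSq_apply] at hns; nlinarith [hns]
  have ha2 : (a:ℝ)^2 ≠ 0 := by positivity
  have hwre : w.re * a^2 = a^2 + X.re*(a^2-1) := by
    rw [hw]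
    simp only [Complex.sub_re, Complex.add_re, Complex.one_re, Complex.inv_re, hns]
    field_simp
    ring
  have hwim : w.im * a^2 = X.im*(a^2+1) := by
    rw [hw]
    simp only [Complex.sub_im, Complex.add_im, Complex.one_im, Complex.inv_im, hns, add_zero]
    field_simp
    ring
  have hb0 : 0 ≤ ‖w‖ := norm_nonneg w
  have habsw : (‖w‖)^2 = w.re^2 + w.im^2 := by
    rw [Complex.sq_norm, Complex.normSq_apply]; ring
  have habs_re : |w.re| ≤ ‖w‖ := Complex.abs_re_le_norm w
  have hre_le := (abs_le.mp habs_re).2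
  have hre_ge := (abs_le.mp habs_re).1
  have hmain : (‖w‖)^2 ≤ 2*‖w‖ + 2*w.re := by
    by_cases hc : w.re^2 + w.im^2 - 2*w.re ≤ 0
    · nlinarith [hb0, habsw]
    · push_neg at hc
      have hp := poly_key a X.re X.im w.re w.im ha hxy h2' hwre hwim hc
      nlinarith [hp, hb0, habsw, hc]
  have hkey : ‖w‖ ≤ 2 * z.re := by
    rw [hzre]
    have h1 : ‖w‖ / 2 ≤ Real.sqrt ((‖w‖ + w.re)/2) := by
      rw [show ‖w‖ / 2 = Real.sqrt ((‖w‖/2)^2) from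
        (Real.sqrt_sq (by positivity)).symm]
      apply Real.sqrt_le_sqrt
      nlinarith [hmain]
    linarith
  have hzim2 : z.im^2 = (‖w‖ - w.re)/2 := by
    have h0 : 0 ≤ (‖w‖ - w.re)/2 := by linarith
    calc z.im^2 = |z.im|^2 := (_root_.sq_abs _).symm
    _ = (‖w‖ - w.re)/2 := by rw [hzim, Real.sq_sqrt h0]
  have hzre2 : z.re^2 = (‖w‖ + w.re)/2 := by
    rw [hzre, Real.sq_sqrt (by linarith)]
  have hfin : ‖-1 + z‖ ^ 2 ≤ 1 := by
    rw [Complex.sq_norm, Complex.normSq_apply]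
    simp only [Complex.add_re, Complex.add_im, Complex.neg_re, Complex.neg_im,
      Complex.one_re, Complex.one_im, neg_zero, zero_add]
    have heq : (-1 + z.re)*(-1 + z.re) + z.im*z.im = ‖w‖ + 1 - 2*z.re := by
      linear_combination hzre2 + hzim2
    rw [heq]; linarith [hkey]
  have hle1 : ‖-1 + z‖ ≤ 1 :=
    (pow_le_one_iff_of_nonneg (norm_nonneg _) two_ne_zero).mp hfin
  exact mul_le_of_le_one_right ha.le hle1
end

section
/- Let a be real with √((1 + √5 − √(2√5 + 2))/2) ≤ a ≤ √((1 + √5 + √(2√5 + 2))/2), and let x₁ be a complex number with |x₁| = a and x₁² ≠ −1. Set w = x₁ + x₁⁻¹ and y₁₋ = (−(2 + w²) − (4 + w⁴)^{1/2}) / (2w), where z^{1/2} denotes the principal square root. Then |y₁₋| ≥ 1. -/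
lemma e2_aux (X Y : ℝ) (hX : X ≤ 0) (hXY : X^2 + Y^2 ≤ 4) :
    0 ≤ (2+X)*(4+X^2-Y^2) + X*((2+X)^2-Y^2) := by
  have hX2 : -2 ≤ X := by nlinarith [sq_nonneg Y]
  rcases le_or_gt (-1) X with h | h
  · nlinarith [mul_nonneg (by linarith : (0:ℝ) ≤ 2*X+2) (by linarith : (0:ℝ) ≤ 4-X^2-Y^2),
      mul_nonneg (sq_nonneg X) (by linarith : (0:ℝ) ≤ X+2)]
  · nlinarith [mul_nonneg (by linarith : (0:ℝ) ≤ -(2*X+2)) (sq_nonneg Y),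
      mul_nonneg (by linarith : (0:ℝ) ≤ X+2) (by nlinarith [sq_nonneg (X+1)] : (0:ℝ) ≤ X^2+X+2)]

lemma gen_aux (A B : ℝ) (hB : 0 ≤ B) (h : 0 ≤ B^2 - A^2) : 0 ≤ A + B := by nlinarith

lemma core (X Y rs is : ℝ) (hrs : 0 ≤ rs)
    (h1 : rs^2 - is^2 = 4 + X^2 - Y^2) (h2 : rs*is = X*Y)
    (hX : X ≤ 0) (hXY : X^2 + Y^2 ≤ 4) :
    0 ≤ (2+X)*rs + Y*is := by
  have hX2 : -2 ≤ X := by nlinarith [sq_nonneg Y]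
  have hR : (0:ℝ) ≤ 4+X^2-Y^2 := by nlinarith [sq_nonneg X]
  have hE1 : (0:ℝ) ≤ 8-2*X^2-2*Y^2 := by linarith
  have hE2 := e2_aux X Y hX hXY
  have hM2 : (rs^2+is^2)^2 = (4+X^2-Y^2)^2 + 4*(X*Y)^2 := by
    have e : (rs^2+is^2)^2 = (rs^2-is^2)^2 + 4*(rs*is)^2 := by ring
    rw [e, h1, h2]
  have key : (((2+X)^2+Y^2)*(4+X^2-Y^2))^2 - (((2+X)^2-Y^2)*(rs^2+is^2))^2 =
      4*Y^2*(8-2*X^2-2*Y^2)*((2+X)*(4+X^2-Y^2)+X*((2+X)^2-Y^2)) := by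
    have e : (((2+X)^2-Y^2)*(rs^2+is^2))^2 = ((2+X)^2-Y^2)^2*((rs^2+is^2)^2) := by ring
    rw [e, hM2]; ring
  have keyge : (0:ℝ) ≤ (((2+X)^2+Y^2)*(4+X^2-Y^2))^2 - (((2+X)^2-Y^2)*(rs^2+is^2))^2 := by
    rw [key]
    have h4 : (0:ℝ) ≤ 4*Y^2 := by positivity
    exact mul_nonneg (mul_nonneg h4 hE1) hE2
  have hQR : (0:ℝ) ≤ ((2+X)^2+Y^2)*(4+X^2-Y^2) := mul_nonneg (by positivity) hR
  have hPMQR := gen_aux (((2+X)^2-Y^2)*(rs^2+is^2)) (((2+X)^2+Y^2)*(4+X^2-Y^2)) hQR keyge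
  rw [← h1] at hPMQR
  have hsq : (Y*is)^2 ≤ ((2+X)*rs)^2 := by nlinarith [hPMQR]
  have h2X : (0:ℝ) ≤ (2+X)*rs := mul_nonneg (by linarith) hrs
  have := gen_aux (Y*is) ((2+X)*rs) h2X (by linarith)
  linarith

lemma core_pos (X Y rs is : ℝ) (hrs : 0 ≤ rs)
    (h1 : rs^2 - is^2 = 4 + X^2 - Y^2) (h2 : rs*is = X*Y) (hX : 0 < X) :
    0 ≤ (2+X)*rs + Y*is := by
  rcases eq_or_lt_of_le hrs with h | h
  · exfalso
    rw [← h] at h2 h1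
    have h2' : X*Y = 0 := by linarith [h2]
    have hY : Y = 0 := by
      rcases mul_eq_zero.1 h2' with h' | h'
      · exact absurd h' (ne_of_gt hX)
      · exact h'
    rw [hY] at h1
    nlinarith [sq_nonneg is]
  · have e : (Y*is)*rs = X*Y^2 := by linear_combination Y*h2
    have hXY2 : (0:ℝ) ≤ X*Y^2 := by positivity
    have hYis : 0 ≤ Y*is := by nlinarith
    have : (0:ℝ) ≤ (2+X)*rs := mul_nonneg (by linarith) hrs
    linarith

lemma ellipse_aux (p q r K : ℝ) (hK2 : 2 ≤ K) (hK : r^2 + 1 ≤ K * r)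
    (hpq : p^2 + q^2 = r^2) :
    (p*(r^2+1))^2*(K^2-4) + (q*(r^2-1))^2*K^2 ≤ K^2*(K^2-4)*r^4 := by
  have h2 : (r^2+1)^2 ≤ K^2*r^2 := by nlinarith
  have hp2 : p^2 ≤ r^2 := by nlinarith [sq_nonneg q]
  have hK4 : (0:ℝ) ≤ K^2 - 4 := by nlinarith
  have hq2 : q^2 = r^2 - p^2 := by linarith
  have hrw : (q*(r^2-1))^2 = (r^2-p^2)*(r^2-1)^2 := by rw [mul_pow, hq2]
  rw [hrw]
  nlinarith [mul_nonneg (sub_nonneg.2 h2) (sub_nonneg.2 hp2),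
    mul_nonneg (mul_nonneg (sq_nonneg r) hK4) (sub_nonneg.2 h2)]

lemma ellipse2 (c p q r : ℝ) (hc : c^2 = 5) (hc2 : 2 ≤ c) (hr : 0 < r)
    (hK : r^2 + 1 ≤ (1+c)*r) (hpq : p^2 + q^2 = r^2) :
    (p*(r^2+1)/r^2)^2*(2+2*c) + (q*(r^2-1)/r^2)^2*(6+2*c) ≤ (6+2*c)*(2+2*c) := by
  have E := ellipse_aux p q r (1+c) (by linarith) hK hpq
  have e6 : (1+c)^2 = 6+2*c := by linear_combination hc
  rw [e6] at E
  have h4 : (0:ℝ) < (r^2)^2 := by positivity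
  rw [div_pow, div_pow, div_mul_eq_mul_div, div_mul_eq_mul_div, ← add_div,
    div_le_iff₀ h4]
  rw [show (6+2*c)-4 = 2+2*c from by ring] at E
  rw [show ((r:ℝ)^2)^2 = r^4 from by ring]
  linarith [E]

lemma inside_aux (c X Y : ℝ) (hc : c^2 = 5) (hc2 : 2 ≤ c) (hX : X ≤ 0)
    (hE : (X-2)^2*(2+2*c) + Y^2*(6+2*c) ≤ (6+2*c)*(2+2*c)) : X^2 + Y^2 ≤ 4 := by
  have hXl : 1 - c ≤ X := by nlinarith [sq_nonneg Y, sq_nonneg (X-2+(1+c))]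
  nlinarith [mul_nonneg (by linarith : (0:ℝ) ≤ -X) (by linarith : (0:ℝ) ≤ X+2+2*c)]


lemma sqrt5_ge_two (c : ℝ) (hc : c^2 = 5) (h0 : 0 ≤ c) : 2 ≤ c := by nlinarith

lemma D_lt_aux (c D : ℝ) (hc : c^2 = 5) (hc2 : 2 ≤ c) (hD : D^2 = 2*c+2) (hD0 : 0 ≤ D) :
    D < 1 + c := by nlinarith

lemma hKr_aux (c D r : ℝ) (hc : c^2 = 5) (hD : D^2 = 2*c+2)
    (h1 : (1+c-D)/2 ≤ r) (h2 : r ≤ (1+c+D)/2) : r^2 + 1 ≤ (1+c)*r := by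
  nlinarith [mul_nonneg (by linarith : (0:ℝ) ≤ r - (1+c-D)/2)
    (by linarith : (0:ℝ) ≤ (1+c+D)/2 - r)]

lemma diff_aux (ur ui rs is : ℝ) (hcore : 0 ≤ ur*rs + ui*is) :
    (ur-rs)^2+(ui-is)^2 ≤ (ur+rs)^2+(ui+is)^2 := by nlinarith

lemma le_of_sq_le (A B : ℝ) (hA : 0 ≤ A) (hB : 0 ≤ B) (h : A^2 ≤ B^2) : A ≤ B := by
  nlinarith

lemma final_aux (A B W : ℝ) (hprod : A*B = 4*W^2) (hle : B ≤ A) (hB : 0 ≤ B) (hW : 0 < W) :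
    2*W ≤ A := by nlinarith [sq_nonneg (A - 2*W), sq_nonneg (A + 2*W)]


set_option maxHeartbeats 1000000 in
/-- For `a` in the stated range, `|x₁| = a` and `x₁² ≠ −1`, setting `w = x₁ + x₁⁻¹`,
the root `y₁₋ = (−(2 + w²) − (4 + w⁴)^{1/2})/(2w)` (principal branch of the square
root) satisfies `|y₁₋| ≥ 1`. -/
theorem stmt_12 (a : ℝ)
    (ha1 : Real.sqrt ((1 + Real.sqrt 5 - Real.sqrt (2 * Real.sqrt 5 + 2)) / 2) ≤ a)
    (ha2 : a ≤ Real.sqrt ((1 + Real.sqrt 5 + Real.sqrt (2 * Real.sqrt 5 + 2)) / 2))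
    (x₁ : ℂ) (hx₁ : ‖x₁‖ = a) (hx₁' : x₁ ^ 2 ≠ -1) :
    1 ≤ ‖(-(2 + (x₁ + x₁⁻¹) ^ 2) -
      (4 + (x₁ + x₁⁻¹) ^ 4) ^ ((1 : ℂ) / 2)) / (2 * (x₁ + x₁⁻¹))‖ := by
  set c := Real.sqrt 5 with hcdef
  have hc : c^2 = 5 := Real.sq_sqrt (by norm_num)
  have hc0 : 0 ≤ c := Real.sqrt_nonneg 5
  have hc2 : 2 ≤ c := sqrt5_ge_two c hc hc0
  set D := Real.sqrt (2*c+2) with hDdef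
  have hD : D^2 = 2*c+2 := Real.sq_sqrt (by linarith)
  have hD0 : 0 ≤ D := Real.sqrt_nonneg _
  have hDlt : D < 1 + c := D_lt_aux c D hc hc2 hD hD0
  have hlo_pos : 0 < (1 + c - D) / 2 := by linarith
  have ha0 : 0 < a := lt_of_lt_of_le (Real.sqrt_pos.2 hlo_pos) ha1
  have ha2' : a^2 ≤ (1 + c + D)/2 := by
    have := pow_le_pow_left₀ ha0.le ha2 2
    rwa [Real.sq_sqrt (by linarith)] at this
  have ha1' : (1 + c - D)/2 ≤ a^2 := by
    have := pow_le_pow_left₀ (Real.sqrt_nonneg _) ha1 2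
    rwa [Real.sq_sqrt (by linarith)] at this
  set r := a^2 with hrdef
  have hr0 : 0 < r := by positivity
  have hKr : r^2 + 1 ≤ (1+c)*r := hKr_aux c D r hc hD ha1' ha2'
  have hx0 : x₁ ≠ 0 := by
    intro h
    rw [h] at hx₁
    simp at hx₁
    rw [← hx₁] at ha0
    exact lt_irrefl 0 ha0
  set w := x₁ + x₁⁻¹ with hwdef
  have hwne : w ≠ 0 := by
    intro h
    apply hx₁'
    have e : x₁^2 + 1 = w * x₁ := by rw [hwdef]; field_simp
    rw [h, zero_mul] at e
    linear_combination e
  set s := (4 + w^4) ^ ((1:ℂ)/2) with hsdef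
  have hs2 : s^2 = 4 + w^4 := by
    rw [hsdef]
    have h12 : ((1:ℂ)/2) = (((2:ℕ)):ℂ)⁻¹ := by norm_num
    rw [h12]
    exact_mod_cast Complex.cpow_nat_inv_pow _ (by norm_num)
  have hsre : 0 ≤ s.re := by
    by_cases hv : (4 + w^4 : ℂ) = 0
    · rw [hsdef, hv, Complex.zero_cpow (by norm_num : ((1:ℂ)/2) ≠ 0)]
      simp
    · rw [hsdef, Complex.cpow_def_of_ne_zero hv, Complex.exp_re]
      apply mul_nonneg (Real.exp_nonneg _)
      apply Real.cos_nonneg_of_mem_Icc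
      have himarg : ((Complex.log (4 + w^4)) * ((1:ℂ)/2)).im = (4 + w^4 : ℂ).arg / 2 := by
        simp [Complex.mul_im, Complex.log_im]
        ring
      rw [himarg]
      constructor
      · have := Complex.neg_pi_lt_arg (4 + w^4 : ℂ)
        linarith
      · have := Complex.arg_le_pi (4 + w^4 : ℂ)
        linarith [Real.pi_pos]
  set X := (w^2).re with hXdef
  set Y := (w^2).im with hYdef
  have e1 : s*s = 4 + w^2*w^2 := by rw [← pow_two, hs2]; ring
  have hre : s.re^2 - s.im^2 = 4 + X^2 - Y^2 := by
    have := congrArg Complex.re e1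
    simp [Complex.mul_re, Complex.add_re] at this
    linear_combination this
  have him : s.re * s.im = X*Y := by
    have := congrArg Complex.im e1
    simp [Complex.mul_im, Complex.add_im] at this
    linear_combination this / 2
  set p := (x₁^2).re with hpdef
  set q := (x₁^2).im with hqdef
  have hns : Complex.normSq (x₁^2) = r^2 := by
    rw [← Complex.sq_norm, norm_pow, hx₁, hrdef]
  have hpq : p^2 + q^2 = r^2 := by
    rw [← hns, Complex.normSq_apply, hpdef, hqdef]; ring
  have hw2 : w^2 = x₁^2 + 2 + (x₁^2)⁻¹ := by
    rw [hwdef]; field_simp; ring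
  have hXe : X = (p + 2) + p / r^2 := by
    rw [hXdef, hw2]
    simp [Complex.add_re, Complex.inv_re, hns, hpdef]
  have hYe : Y = q - q / r^2 := by
    rw [hYdef, hw2]
    simp [Complex.add_im, Complex.inv_im, hns, hqdef]
    try ring
  have hXm2 : X - 2 = p*(r^2+1)/r^2 := by
    rw [hXe]; field_simp; ring
  have hYm : Y = q*(r^2-1)/r^2 := by
    rw [hYe]; field_simp
  have hE : (X-2)^2*(2+2*c) + Y^2*(6+2*c) ≤ (6+2*c)*(2+2*c) := by
    rw [hXm2, hYm]
    exact ellipse2 c p q r hc hc2 hr0 hKr hpq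
  have hcore : 0 ≤ (2+X)*s.re + Y*s.im := by
    rcases le_or_gt X 0 with hX | hX
    · exact core X Y s.re s.im hsre hre him hX (inside_aux c X Y hc hc2 hX hE)
    · exact core_pos X Y s.re s.im hsre hre him hX
  set u := (2 + w^2 : ℂ) with hudef
  have hure : u.re = 2 + X := by rw [hudef]; simp [hXdef]
  have huim : u.im = Y := by rw [hudef]; simp [hYdef]
  have hprod : (u+s)*(u-s) = 4*w^2 := by
    rw [hudef]; linear_combination -hs2
  have habsprod : ‖u+s‖ * ‖u-s‖ = 4 * ‖w‖^2 := by
    rw [← norm_mul, hprod, norm_mul, norm_pow]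
    norm_num
  have hdiff : ‖u-s‖^2 ≤ ‖u+s‖^2 := by
    rw [Complex.sq_norm, Complex.sq_norm, Complex.normSq_apply, Complex.normSq_apply]
    simp only [Complex.add_re, Complex.add_im, Complex.sub_re, Complex.sub_im, hure, huim]
    have := diff_aux (2+X) Y s.re s.im hcore
    linarith [this, sq_nonneg (2+X-s.re)]
  have habs_nonneg1 : 0 ≤ ‖u-s‖ := norm_nonneg _
  have habs_nonneg2 : 0 ≤ ‖u+s‖ := norm_nonneg _
  have hle : ‖u-s‖ ≤ ‖u+s‖ :=
    le_of_sq_le _ _ habs_nonneg1 habs_nonneg2 hdiff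
  have hwabs : 0 < ‖w‖ := norm_pos_iff.2 hwne
  have hfinal : 2 * ‖w‖ ≤ ‖u+s‖ :=
    final_aux _ _ _ habsprod hle habs_nonneg1 hwabs
  have hgoal : (-(2 + w ^ 2) - (4 + w ^ 4) ^ ((1:ℂ)/2) : ℂ) = -(u + s) := by
    rw [hudef, hsdef]; ring
  rw [hgoal, norm_div, norm_neg, norm_mul]
  rw [le_div_iff₀ (mul_pos (by norm_num : (0:ℝ) < ‖(2:ℂ)‖) hwabs)]
  rw [one_mul, show ‖(2:ℂ)‖ = 2 from by norm_num]
  exact hfinal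
end

section
/- Let a be real with √((1 + √5 − √(2√5 + 2))/2) ≤ a ≤ √((1 + √5 + √(2√5 + 2))/2), and let x₁ be a complex number with |x₁| = a and x₁² ≠ −1. Set w = x₁ + x₁⁻¹ and y₁₊ = (−(2 + w²) + (4 + w⁴)^{1/2}) / (2w), where z^{1/2} denotes the principal square root. Then |y₁₊| ≤ 1. -/
set_option maxHeartbeats 1000000 in
lemma aux13 (p q R I : ℝ) (hR : 0 ≤ R) (e1 : R^2 - I^2 = 4 + p^2 - q^2)
    (e2 : R*I = p*q) (hkey : p ≤ 0 → p^2 + q^2 ≤ 4) :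
    0 ≤ (2+p)*R + q*I := by
  have hp : -2 ≤ p := by
    rcases le_or_gt p 0 with h | h
    · nlinarith [hkey h, sq_nonneg q]
    · linarith
  by_contra hcon
  push_neg at hcon
  have h2p : 0 ≤ 2 + p := by linarith
  have hqI : q * I < 0 := by nlinarith [mul_nonneg h2p hR]
  have hRpos : 0 < R := by
    rcases hR.eq_or_lt with h0 | h0
    · exfalso
      have hpq : p * q = 0 := by rw [← e2, ← h0]; ring
      have hq : q ≠ 0 := by
        intro hq; rw [hq] at hqI; simp at hqI
      have hp0 : p = 0 := by
        rcases mul_eq_zero.1 hpq with h | h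
        · exact h
        · exact absurd h hq
      have := hkey (le_of_eq hp0)
      nlinarith [sq_nonneg I]
    · exact h0
  have he2q : q * (R * I) = p * q^2 := by rw [e2]; ring
  have hpq2 : p * q^2 < 0 := by nlinarith [mul_neg_of_pos_of_neg hRpos hqI]
  have hpneg : p < 0 := by nlinarith [sq_nonneg q]
  have hm : p^2 + q^2 ≤ 4 := hkey hpneg.le
  have hq2 : 0 < q^2 := by nlinarith
  have hsq : (2+p)^2 * R^2 < q^2 * I^2 := by nlinarith [mul_nonneg h2p hR]
  have hI2 : 0 < I^2 := by nlinarith [sq_nonneg R, mul_nonneg h2p hR]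
  have hRI : R^2 * I^2 = p^2 * q^2 := by
    calc R^2 * I^2 = (R*I)^2 := by ring
    _ = (p*q)^2 := by rw [e2]
    _ = p^2 * q^2 := by ring
  have hI4 : (2+p)^2 * p^2 * q^2 < q^2 * (I^2 * I^2) := by
    have := mul_lt_mul_of_pos_left hsq hI2
    nlinarith [hRI]
  have hI4' : (2+p)^2 * p^2 < I^2 * I^2 := by
    rcases lt_or_ge ((2+p)^2 * p^2) (I^2 * I^2) with h | h
    · exact h
    · exfalso; nlinarith [mul_le_mul_of_nonneg_left h hq2.le]
  have ht0 : 0 ≤ -p * (2+p) := mul_nonneg (by linarith) h2p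
  have hIlb : -p * (2+p) < I^2 := by
    nlinarith [hI4', ht0, hI2]
  have hc1 : 0 ≤ 4 + p^2 - q^2 := by nlinarith
  have hR2 : R^2 = I^2 + (4 + p^2 - q^2) := by linarith
  have hfin : (-p*(2+p)) * ((-p*(2+p)) + (4 + p^2 - q^2)) < p^2 * q^2 := by
    calc (-p*(2+p)) * ((-p*(2+p)) + (4 + p^2 - q^2))
        < I^2 * (I^2 + (4 + p^2 - q^2)) := by nlinarith [hIlb, ht0, hc1, hI2]
    _ = R^2 * I^2 := by rw [hR2]; ring
    _ = p^2 * q^2 := hRI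
  nlinarith [hfin, mul_nonneg (neg_nonneg.2 hpneg.le) (by linarith : (0:ℝ) ≤ 4 - p^2 - q^2)]


lemma key13 (s5 n X Y U V : ℝ) (hs5 : s5^2 = 5) (hs5nn : 0 ≤ s5) (hnpos : 0 < n)
    (hsum : n^2 + 1 ≤ (1+s5)*n) (hXY : X^2 + Y^2 = n)
    (hU : n * U = X * (n+1)) (hV : n * V = Y * (n-1))
    (h : U^2 - V^2 ≤ 0) : U^2 + V^2 ≤ 2 := by
  have h1 : X^2*(n+1)^2 ≤ Y^2*(n-1)^2 := by
    have h2 : n^2 * U^2 ≤ n^2 * V^2 := by nlinarith [sq_nonneg n]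
    calc X^2*(n+1)^2 = (X*(n+1))^2 := by ring
    _ = (n*U)^2 := by rw [hU]
    _ = n^2*U^2 := by ring
    _ ≤ n^2*V^2 := h2
    _ = (n*V)^2 := by ring
    _ = (Y*(n-1))^2 := by rw [hV]
    _ = Y^2*(n-1)^2 := by ring
  have hS : 0 ≤ n*(n-1)^2 - X^2*(2*(n^2+1)) := by nlinarith [h1, hXY]
  have hT : 0 ≤ (1+s5)*n - (n^2+1) := by linarith
  have hs5g1 : (1:ℝ) ≤ s5 := by nlinarith
  have hb1 : 0 ≤ 2*n*(n^2+1) - (n^2-1)^2 := by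
    have hP1 : 0 ≤ (n^2+1) * ((1+s5)*n - (n^2+1)) := mul_nonneg (by positivity) hT
    have hP2 : 0 ≤ (s5-1)*n * ((1+s5)*n - (n^2+1)) :=
      mul_nonneg (mul_nonneg (by linarith) hnpos.le) hT
    nlinarith [hP1, hP2]
  have hGid : (2*n^2 - X^2*(n+1)^2 - Y^2*(n-1)^2) * (n^2+1) =
      2*n*(n*(n-1)^2 - X^2*(2*(n^2+1))) + n*(2*n*(n^2+1) - (n^2-1)^2) := by
    linear_combination (-(n-1)^2*(n^2+1)) * hXY
  have hG : 0 ≤ (2*n^2 - X^2*(n+1)^2 - Y^2*(n-1)^2) * (n^2+1) := by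
    rw [hGid]
    have h3 := mul_nonneg hnpos.le hS
    have h4 := mul_nonneg hnpos.le hb1
    linarith
  have h2n : X^2*(n+1)^2 + Y^2*(n-1)^2 ≤ 2*n^2 := by
    have hpos : (0:ℝ) < n^2+1 := by positivity
    nlinarith [hG, hpos]
  have hfin2 : n^2*(U^2+V^2) ≤ n^2*2 := by
    have : n^2*(U^2+V^2) = X^2*(n+1)^2 + Y^2*(n-1)^2 := by
      calc n^2*(U^2+V^2) = (n*U)^2 + (n*V)^2 := by ring
      _ = (X*(n+1))^2 + (Y*(n-1))^2 := by rw [hU, hV]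
      _ = X^2*(n+1)^2 + Y^2*(n-1)^2 := by ring
    linarith
  exact le_of_mul_le_mul_left hfin2 (pow_pos hnpos 2)

lemma sqrtstep13 (x y m : ℝ) (hx : 0 ≤ x) (hm : 0 ≤ m) (hxy : x ≤ y)
    (hp : x * y = (2*m)^2) : x ≤ 2*m := by
  by_contra hcon
  push_neg at hcon
  nlinarith [mul_le_mul_of_nonneg_left hxy hx, hcon]

lemma absstep13 (Ar Ai Br Bi : ℝ) (main : 0 ≤ Ar*Br + Ai*Bi) :
    (Br-Ar)^2 + (Bi-Ai)^2 ≤ (Br+Ar)^2 + (Bi+Ai)^2 := by nlinarith [main]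

set_option maxHeartbeats 1000000 in
/-- For `a` in the stated range, `|x₁| = a` and `x₁² ≠ −1`, setting `w = x₁ + x₁⁻¹`,
the root `y₁₊ = (−(2 + w²) + (4 + w⁴)^{1/2})/(2w)` (principal branch of the square
root) satisfies `|y₁₊| ≤ 1`. -/
theorem stmt_13 (a : ℝ)
    (ha1 : Real.sqrt ((1 + Real.sqrt 5 - Real.sqrt (2 * Real.sqrt 5 + 2)) / 2) ≤ a)
    (ha2 : a ≤ Real.sqrt ((1 + Real.sqrt 5 + Real.sqrt (2 * Real.sqrt 5 + 2)) / 2))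
    (x₁ : ℂ) (hx₁ : ‖x₁‖ = a) (hx₁' : x₁ ^ 2 ≠ -1) :
    ‖(-(2 + (x₁ + x₁⁻¹) ^ 2) +
      (4 + (x₁ + x₁⁻¹) ^ 4) ^ ((1 : ℂ) / 2)) / (2 * (x₁ + x₁⁻¹))‖ ≤ 1 := by
  have hs5nn : (0:ℝ) ≤ Real.sqrt 5 := Real.sqrt_nonneg 5
  have hs5 : (Real.sqrt 5)^2 = 5 := Real.sq_sqrt (by norm_num)
  set s5 := Real.sqrt 5 with hs5def
  have hcnn : (0:ℝ) ≤ Real.sqrt (2*s5+2) := Real.sqrt_nonneg _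
  have hc : (Real.sqrt (2*s5+2))^2 = 2*s5+2 := Real.sq_sqrt (by linarith)
  set c := Real.sqrt (2*s5+2) with hcdef
  have hilt : c < 1 + s5 := by nlinarith
  have hi0 : (0:ℝ) < (1+s5-c)/2 := by linarith
  have ho0 : (0:ℝ) ≤ (1+s5+c)/2 := by linarith
  have ha0 : 0 < a := lt_of_lt_of_le (Real.sqrt_pos.mpr hi0) ha1
  have hnlo : (1+s5-c)/2 ≤ a^2 := by
    calc (1+s5-c)/2 = (Real.sqrt ((1+s5-c)/2))^2 := (Real.sq_sqrt hi0.le).symm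
    _ ≤ a^2 := by gcongr
  have hnhi : a^2 ≤ (1+s5+c)/2 := by
    calc a^2 ≤ (Real.sqrt ((1+s5+c)/2))^2 := by gcongr
    _ = (1+s5+c)/2 := Real.sq_sqrt ho0
  set n := a^2 with hndef
  have hnpos : 0 < n := pow_pos ha0 2
  have hsum : n^2 + 1 ≤ (1+s5)*n := by
    nlinarith [mul_nonneg (sub_nonneg.2 hnhi) (sub_nonneg.2 hnlo)]
  -- complex setup
  have hx0 : x₁ ≠ 0 := by
    intro h
    rw [h, norm_zero] at hx₁
    exact absurd hx₁.symm (ne_of_gt ha0)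
  set w := x₁ + x₁⁻¹ with hwdef
  have hw0 : w ≠ 0 := by
    intro h
    apply hx₁'
    have hk : x₁ * w = x₁^2 + 1 := by
      rw [hwdef]; field_simp
    rw [h, mul_zero] at hk
    linear_combination -hk
  have hns : Complex.normSq x₁ = n := by rw [← Complex.sq_norm, hx₁]
  set X := x₁.re with hXdef
  set Y := x₁.im with hYdef
  have hXY : X^2 + Y^2 = n := by
    rw [Complex.normSq_apply] at hns
    linear_combination hns
  set U := w.re with hUdef
  set V := w.im with hVdef
  have hU : n * U = X * (n+1) := by
    rw [hUdef, hwdef, Complex.add_re, Complex.inv_re, hns]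
    field_simp
    ring
  have hV : n * V = Y * (n-1) := by
    rw [hVdef, hwdef, Complex.add_im, Complex.inv_im, hns]
    field_simp
    ring
  have key : U^2 - V^2 ≤ 0 → U^2 + V^2 ≤ 2 :=
    fun h => key13 s5 n X Y U V hs5 hs5nn hnpos hsum hXY hU hV h
  have hkey2 : U^2 - V^2 ≤ 0 → (U^2-V^2)^2 + (2*U*V)^2 ≤ 4 := by
    intro h
    have h2 := key h
    have h0 : (0:ℝ) ≤ U^2 + V^2 := by positivity
    have hid : (U^2-V^2)^2 + (2*U*V)^2 = (U^2+V^2)^2 := by ring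
    rw [hid]
    nlinarith [h2, h0]
  -- the square root
  set D := (4:ℂ) + w^4 with hDdef
  set B := D ^ ((1:ℂ)/2) with hBdef
  have hB2 : B^2 = D := by
    rw [hBdef, show (1:ℂ)/2 = ((2:ℕ):ℂ)⁻¹ by norm_num]
    exact Complex.cpow_nat_inv_pow _ two_ne_zero
  have hBre : 0 ≤ B.re := by
    rw [hBdef, show (1:ℂ)/2 = (2⁻¹:ℂ) by norm_num, Complex.cpow_inv_two_re]
    exact Real.sqrt_nonneg _
  have hDre : D.re = 4 + (U^2-V^2)^2 - (2*U*V)^2 := by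
    rw [hDdef]
    simp [Complex.add_re, pow_succ, Complex.mul_re, Complex.mul_im]
    all_goals ring
  have hDim : D.im = 2*(U^2-V^2)*(2*U*V) := by
    rw [hDdef]
    simp [Complex.add_im, pow_succ, Complex.mul_re, Complex.mul_im]
    all_goals ring
  have e1 : B.re^2 - B.im^2 = 4 + (U^2-V^2)^2 - (2*U*V)^2 := by
    have h := congrArg Complex.re hB2
    rw [pow_two, Complex.mul_re, hDre] at h
    linear_combination h
  have e2 : B.re*B.im = (U^2-V^2)*(2*U*V) := by
    have h := congrArg Complex.im hB2
    rw [pow_two, Complex.mul_im, hDim] at h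
    linear_combination h/2
  have main := aux13 (U^2-V^2) (2*U*V) B.re B.im hBre e1 e2 hkey2
  -- assemble
  set A := (2:ℂ) + w^2 with hAdef
  have hAre : A.re = 2 + (U^2-V^2) := by
    rw [hAdef]
    simp [Complex.add_re, pow_two, Complex.mul_re]
    all_goals ring
  have hAim : A.im = 2*U*V := by
    rw [hAdef]
    simp [Complex.add_im, pow_two, Complex.mul_im]
    all_goals ring
  have main' : 0 ≤ A.re*B.re + A.im*B.im := by rw [hAre, hAim]; exact main
  have h1 : ‖B - A‖ ≤ ‖B + A‖ := by
    have hs1 : ‖B-A‖^2 = (B.re-A.re)^2 + (B.im-A.im)^2 := by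
      rw [Complex.sq_norm, Complex.normSq_apply, Complex.sub_re, Complex.sub_im]; ring
    have hs2 : ‖B+A‖^2 = (B.re+A.re)^2 + (B.im+A.im)^2 := by
      rw [Complex.sq_norm, Complex.normSq_apply, Complex.add_re, Complex.add_im]; ring
    have hsq : ‖B-A‖^2 ≤ ‖B+A‖^2 := by
      rw [hs1, hs2]
      exact absstep13 A.re A.im B.re B.im main'
    exact le_of_pow_le_pow_left₀ two_ne_zero (norm_nonneg _) hsq
  have h2 : (B - A) * (B + A) = -(4 * w^2) := by
    calc (B - A) * (B + A) = B^2 - A^2 := by ring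
    _ = D - A^2 := by rw [hB2]
    _ = -(4 * w^2) := by rw [hDdef, hAdef]; ring
  have hprod : ‖B - A‖ * ‖B + A‖ = (2 * ‖w‖)^2 := by
    have hneg : ‖(-(4*w^2))‖ = 4 * ‖w‖^2 := by
      rw [norm_neg, norm_mul, norm_pow]
      norm_num
    rw [← norm_mul, h2, hneg]
    ring
  have h3 : ‖B - A‖ ≤ 2 * ‖w‖ :=
    sqrtstep13 _ _ _ (norm_nonneg _) (norm_nonneg _) h1 hprod
  have hwabs : 0 < ‖w‖ := norm_pos_iff.mpr hw0
  rw [norm_div, norm_mul, Complex.norm_two]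
  rw [div_le_one (by positivity)]
  calc ‖-A + B‖ = ‖B - A‖ := by rw [neg_add_eq_sub]
  _ ≤ 2 * ‖w‖ := h3
end

section
/- Let a be real with |a − a⁻¹| < 1. Define g : [0, 2π] → ℂ by g(θ) = a·e^{iθ}·(−1 − (a·e^{iθ} + 1 − a⁻¹·e^{−iθ})^{1/2}), where z^{1/2} denotes the principal square root. Then g never vanishes, and (1/(2π)) · ∫₀^{2π} Im(g′(θ)/g(θ)) dθ = 1; that is, the total variation of arg Y₋ along the circle |X| = a is 2π, where Y₋(X) = X·(−1 − (X + 1 − X⁻¹)^{1/2}). -/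
open Complex

lemma sqrt_re_pos' {z : ℂ} (hz : 0 < z.re) : 0 < (z ^ ((1:ℂ)/2)).re := by
  have hz0 : z ≠ 0 := by
    intro h; rw [h] at hz; simp at hz
  rw [Complex.cpow_def_of_ne_zero hz0, Complex.exp_re]
  have harg : |z.arg| < Real.pi/2 := Complex.abs_arg_lt_pi_div_two_iff.2 (Or.inl hz)
  have him : (Complex.log z * ((1:ℂ)/2)).im = z.arg / 2 := by
    simp [Complex.mul_im, Complex.log_im]
    ring
  rw [him]
  have h1 := abs_lt.1 harg
  have := Real.pi_pos
  have hcos : 0 < Real.cos (z.arg / 2) :=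
    Real.cos_pos_of_mem_Ioo ⟨by linarith, by linarith⟩
  positivity

/-- For real `a > 0` with `|a − a⁻¹| < 1`, the function
`g(θ) = a·e^{iθ}·(−1 − (a·e^{iθ} + 1 − a⁻¹·e^{−iθ})^{1/2})` (principal square root),
i.e. `Y₋` evaluated along the circle `|X| = a`, never vanishes, and the total variation
of `arg Y₋` along the circle is `2π`: `(1/(2π))·∫₀^{2π} Im(g′(θ)/g(θ)) dθ = 1`. -/
theorem stmt_18 (a : ℝ) (ha : 0 < a) (hta : |a - a⁻¹| < 1)
    (g : ℝ → ℂ)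
    (hg : g = fun θ : ℝ => (a : ℂ) * Complex.exp (θ * Complex.I) *
      (-1 - ((a : ℂ) * Complex.exp (θ * Complex.I) + 1 -
        (a : ℂ)⁻¹ * Complex.exp (-θ * Complex.I)) ^ ((1 : ℂ) / 2))) :
    (∀ θ : ℝ, g θ ≠ 0) ∧
    (1 / (2 * Real.pi)) * ∫ θ in (0:ℝ)..(2 * Real.pi), (deriv g θ / g θ).im = 1 := by
  have ha0 : (a:ℂ) ≠ 0 := Complex.ofReal_ne_zero.2 ha.ne'
  -- basic objects
  set w : ℝ → ℂ := fun θ => (a : ℂ) * Complex.exp (θ * Complex.I) + 1 -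
      (a : ℂ)⁻¹ * Complex.exp (-θ * Complex.I) with hwdef
  set s : ℝ → ℂ := fun θ => w θ ^ ((1:ℂ)/2) with hsdef
  have hwre : ∀ θ : ℝ, 0 < (w θ).re := by
    intro θ
    have h1 : (w θ).re = 1 + (a - a⁻¹) * Real.cos θ := by
      simp [hwdef, Complex.exp_re, Complex.exp_im, Complex.mul_re, Complex.mul_im]
      ring
    rw [h1]
    have h2 := abs_lt.1 hta
    have h3 : |Real.cos θ| ≤ 1 := Real.abs_cos_le_one θ
    nlinarith [neg_abs_le ((a - a⁻¹) * Real.cos θ), abs_mul (a - a⁻¹) (Real.cos θ),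
      abs_nonneg (a - a⁻¹), abs_nonneg (Real.cos θ)]
  have hsre : ∀ θ : ℝ, 0 < (s θ).re := fun θ => sqrt_re_pos' (hwre θ)
  have hwslit : ∀ θ : ℝ, w θ ∈ Complex.slitPlane := fun θ =>
    Complex.mem_slitPlane_iff.2 (Or.inl (hwre θ))
  have hhne : ∀ θ : ℝ, (-1 - s θ : ℂ) ≠ 0 := by
    intro θ h
    have : ((-1 - s θ : ℂ)).re = 0 := by rw [h]; simp
    simp only [Complex.sub_re, Complex.neg_re, Complex.one_re] at this
    linarith [hsre θ]
  have hgne : ∀ θ : ℝ, g θ ≠ 0 := by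
    intro θ
    rw [hg]
    exact mul_ne_zero (mul_ne_zero ha0 (Complex.exp_ne_zero _)) (hhne θ)
  have h1sne : ∀ θ : ℝ, (1 + s θ : ℂ) ≠ 0 := by
    intro θ h
    have : ((1 + s θ : ℂ)).re = 0 := by rw [h]; simp
    simp only [Complex.add_re, Complex.one_re] at this
    linarith [hsre θ]
  have h1sslit : ∀ θ : ℝ, (1 + s θ : ℂ) ∈ Complex.slitPlane := by
    intro θ
    refine Complex.mem_slitPlane_iff.2 (Or.inl ?_)
    simp only [Complex.add_re, Complex.one_re]
    linarith [hsre θ]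
  -- derivatives
  have hE : ∀ θ : ℝ, HasDerivAt (fun θ : ℝ => Complex.exp (θ * Complex.I))
      (Complex.I * Complex.exp (θ * Complex.I)) θ := by
    intro θ
    have h1 : HasDerivAt (fun θ : ℝ => (θ : ℂ) * Complex.I) Complex.I θ := by
      simpa using (Complex.ofRealCLM.hasDerivAt (x := θ)).mul_const Complex.I
    simpa [mul_comm] using h1.cexp
  have hE' : ∀ θ : ℝ, HasDerivAt (fun θ : ℝ => Complex.exp (-θ * Complex.I))
      (-Complex.I * Complex.exp (-θ * Complex.I)) θ := by
    intro θ
    have h1 : HasDerivAt (fun θ : ℝ => (-θ : ℝ) * Complex.I) (-Complex.I) θ := by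
      have := ((Complex.ofRealCLM.hasDerivAt (x := θ)).neg).mul_const Complex.I
      simpa using this
    have h2 : HasDerivAt (fun θ : ℝ => ((-θ : ℝ) : ℂ) * Complex.I) (-Complex.I) θ := by
      simpa using h1
    have := h2.cexp
    simp only [Complex.ofReal_neg, neg_mul] at this ⊢
    simpa [mul_comm] using this
  -- derivative of w
  set w' : ℝ → ℂ := fun θ => (a : ℂ) * (Complex.I * Complex.exp (θ * Complex.I)) -
      (a : ℂ)⁻¹ * (-Complex.I * Complex.exp (-θ * Complex.I)) with hw'def
  have hW : ∀ θ : ℝ, HasDerivAt w (w' θ) θ := by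
    intro θ
    have := (((hE θ).const_mul (a : ℂ)).add_const 1).fun_sub ((hE' θ).const_mul ((a : ℂ)⁻¹))
    simpa [hwdef, hw'def] using this
  set s' : ℝ → ℂ := fun θ => (1:ℂ)/2 * w θ ^ ((1:ℂ)/2 - 1) * w' θ with hs'def
  have hS : ∀ θ : ℝ, HasDerivAt s (s' θ) θ := by
    intro θ
    exact (Complex.hasStrictDerivAt_cpow_const (hwslit θ)).hasDerivAt.comp θ (hW θ)
  -- derivative of g
  set G : ℝ → ℂ := fun θ => (a : ℂ) * (Complex.I * Complex.exp (θ * Complex.I)) *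
      (-1 - s θ) + (a : ℂ) * Complex.exp (θ * Complex.I) * (-(s' θ)) with hGdef
  have hG : ∀ θ : ℝ, HasDerivAt g (G θ) θ := by
    intro θ
    have hA : HasDerivAt (fun θ : ℝ => (a : ℂ) * Complex.exp (θ * Complex.I))
        ((a : ℂ) * (Complex.I * Complex.exp (θ * Complex.I))) θ := (hE θ).const_mul _
    have hH : HasDerivAt (fun θ : ℝ => (-1 - s θ : ℂ)) (-(s' θ)) θ := by
      simpa using (hasDerivAt_const θ (-1 : ℂ)).fun_sub (hS θ)
    have := hA.fun_mul hH
    rw [hg]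
    convert this using 1
  -- the antiderivative
  set Ψ : ℝ → ℝ := fun θ => θ + (Complex.log (1 + s θ)).im with hΨdef
  have hΨ : ∀ θ : ℝ, HasDerivAt Ψ (1 + (s' θ / (1 + s θ)).im) θ := by
    intro θ
    have hL : HasDerivAt (fun θ : ℝ => Complex.log (1 + s θ)) (s' θ / (1 + s θ)) θ := by
      have h1 : HasDerivAt (fun θ : ℝ => (1 + s θ : ℂ)) (s' θ) θ := by
        simpa using (hasDerivAt_const θ (1 : ℂ)).fun_add (hS θ)
      exact h1.clog_real (h1sslit θ)
    have hIm : HasDerivAt (fun θ : ℝ => (Complex.log (1 + s θ)).im)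
        ((s' θ / (1 + s θ)).im) θ := by
      exact (Complex.imCLM.hasFDerivAt.comp_hasDerivAt θ hL)
    exact (hasDerivAt_id θ).add hIm
  -- the key identity
  have hkey : ∀ θ : ℝ, (deriv g θ / g θ).im = 1 + (s' θ / (1 + s θ)).im := by
    intro θ
    rw [(hG θ).deriv]
    have hgθ : g θ = (a : ℂ) * Complex.exp (θ * Complex.I) * (-1 - s θ) := by rw [hg]
    have hEne : Complex.exp ((θ:ℂ) * Complex.I) ≠ 0 := Complex.exp_ne_zero _
    have hdiv : G θ / g θ = Complex.I + s' θ / (1 + s θ) := by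
      rw [hgθ, hGdef]
      have hne1 : (-1 - s θ : ℂ) ≠ 0 := hhne θ
      have hne2 : (1 + s θ : ℂ) ≠ 0 := h1sne θ
      field_simp
      ring
    rw [hdiv]
    simp
  -- value at endpoints
  have hper : w (2 * Real.pi) = w 0 := by
    simp only [hwdef]
    push_cast
    rw [neg_mul, Complex.exp_neg, Complex.exp_two_pi_mul_I]
    simp
  -- integral computation
  have hint : (∫ θ in (0:ℝ)..(2 * Real.pi), (deriv g θ / g θ).im) = 2 * Real.pi := by
    have hcont : Continuous fun θ : ℝ => 1 + (s' θ / (1 + s θ)).im := by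
      have hwc : Continuous w := by
        apply Continuous.sub
        · exact (continuous_const.mul ((Complex.continuous_ofReal.mul
            continuous_const).cexp)).add continuous_const
        · exact continuous_const.mul
            (((Complex.continuous_ofReal.neg).mul continuous_const).cexp)
      have hwc' : Continuous w' := by
        apply Continuous.sub
        · exact continuous_const.mul (continuous_const.mul
            ((Complex.continuous_ofReal.mul continuous_const).cexp))
        · exact continuous_const.mul (continuous_const.mul
            (((Complex.continuous_ofReal.neg).mul continuous_const).cexp))
      have hcpow : Continuous fun θ : ℝ => w θ ^ ((1:ℂ)/2 - 1) := by
        rw [continuous_iff_continuousAt]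
        intro θ
        exact (continuousAt_cpow_const (hwslit θ)).comp hwc.continuousAt
      have hsc : Continuous s := by
        rw [continuous_iff_continuousAt]
        intro θ
        exact (continuousAt_cpow_const (hwslit θ)).comp hwc.continuousAt
      have hs'c : Continuous s' := (continuous_const.mul hcpow).mul hwc'
      exact continuous_const.add
        (Complex.continuous_im.comp (hs'c.div (continuous_const.add hsc) h1sne))
    have heq : (fun θ : ℝ => 1 + (s' θ / (1 + s θ)).im) =
        fun θ : ℝ => (deriv g θ / g θ).im := by
      funext θ; rw [hkey θ]
    have hii : IntervalIntegrable (fun θ : ℝ => (deriv g θ / g θ).im)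
        MeasureTheory.volume 0 (2 * Real.pi) := by
      rw [← heq]; exact hcont.intervalIntegrable _ _
    have := intervalIntegral.integral_eq_sub_of_hasDerivAt
      (f := Ψ) (f' := fun θ : ℝ => (deriv g θ / g θ).im)
      (a := 0) (b := 2 * Real.pi)
      (fun θ _ => by simpa [hkey θ] using hΨ θ) hii
    rw [this]
    have hs2 : s (2 * Real.pi) = s 0 := by simp only [hsdef]; rw [hper]
    simp [hΨdef, hs2]
  refine ⟨hgne, ?_⟩
  rw [hint]
  have hpi : Real.pi ≠ 0 := Real.pi_ne_zero
  field_simp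
end
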